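/- Let u, v ∈ H \ {0} in a real Hilbert space H, and set U = ℝ₊u and V = ℝ₊v (the closed rays generated by u and v). Then ⟨P_U x, P_V x⟩ = 0 for all x ∈ H if and only if u ∈ ℝ₋₋ v (u is a negative multiple of v) or ⟨u,v⟩ = 0. -/

import Mathlib

open RealInnerProductSpace Pointwise

variable {H : Type*} [NormedAddCommGroup H] [InnerProductSpace ℝ H] [CompleteSpace H]

/-- `P` is the metric projection (nearest-point map) onto `C`. -/
def IsProjOn (C : Set H) (P : H → H) : Prop :=
  ∀ x, P x ∈ C ∧ ∀ y ∈ C, ‖x - P x‖ ≤ ‖x - y‖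

lemma proj_ray_formula (u : H) (hu : u ≠ 0) (P : H → H)
    (hP : IsProjOn {x : H | ∃ t : ℝ, 0 ≤ t ∧ x = t • u} P) (x : H) :
    P x = (max ⟪x, u⟫ 0 / ‖u‖ ^ 2) • u := by
  have hn : (0:ℝ) < ‖u‖ ^ 2 := pow_pos (norm_pos_iff.mpr hu) 2
  set m := max ⟪x, u⟫ 0 with hm
  have hm0 : 0 ≤ m := le_max_right _ _
  have hmip : ⟪x, u⟫ ≤ m := le_max_left _ _
  have hkey : m * (m - ⟪x, u⟫) = 0 := by
    rcases le_or_gt 0 ⟪x, u⟫ with h | h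
    · rw [hm, max_eq_left h]; ring
    · rw [hm, max_eq_right h.le]; ring
  set c := m / ‖u‖ ^ 2 with hc
  have hc0 : 0 ≤ c := div_nonneg hm0 hn.le
  set q := c • u with hq
  have hqS : q ∈ {x : H | ∃ t : ℝ, 0 ≤ t ∧ x = t • u} := ⟨c, hc0, rfl⟩
  have expand : ∀ s : ℝ, ‖x - s • u‖ ^ 2 = ‖x‖ ^ 2 - 2 * s * ⟪x, u⟫ + s ^ 2 * ‖u‖ ^ 2 := by
    intro s
    rw [norm_sub_sq_real, real_inner_smul_right, norm_smul]
    simp [mul_pow, sq_abs]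
    ring
  have hqmin : ∀ y ∈ {x : H | ∃ t : ℝ, 0 ≤ t ∧ x = t • u}, ‖x - q‖ ≤ ‖x - y‖ := by
    rintro y ⟨t, ht, rfl⟩
    have h1 : ‖x - q‖ ^ 2 ≤ ‖x - t • u‖ ^ 2 := by
      rw [hq, expand, expand]
      have hcn : c * ‖u‖ ^ 2 = m := by rw [hc]; exact div_mul_cancel₀ m hn.ne'
      nlinarith [sq_nonneg (t * ‖u‖ ^ 2 - m), mul_nonneg ht (sub_nonneg.mpr hmip),
        mul_nonneg (mul_nonneg ht (sub_nonneg.mpr hmip)) hn.le]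
    nlinarith [norm_nonneg (x - q), norm_nonneg (x - t • u)]
  obtain ⟨hpS, hpmin⟩ := hP x
  set p := P x with hp
  have heq : ‖x - p‖ = ‖x - q‖ := le_antisymm (hpmin q hqS) (hqmin p hpS)
  obtain ⟨t₁, ht₁, hpe⟩ := hpS
  have hmidS : (1/2 : ℝ) • (p + q) ∈ {x : H | ∃ t : ℝ, 0 ≤ t ∧ x = t • u} := by
    refine ⟨(t₁ + c) / 2, by positivity, ?_⟩
    rw [hpe, hq]
    module
  have h3 : ‖x - p‖ ≤ ‖x - (1/2 : ℝ) • (p + q)‖ := hpmin _ hmidS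
  have hpar := parallelogram_law_with_norm ℝ (x - p) (x - q)
  have hsum : (x - p) + (x - q) = (2 : ℝ) • (x - (1/2 : ℝ) • (p + q)) := by module
  have hnsum : ‖(x - p) + (x - q)‖ = 2 * ‖x - (1/2 : ℝ) • (p + q)‖ := by
    rw [hsum, norm_smul]; simp
  have hdiff : (x - p) - (x - q) = q - p := by abel
  have hz : ‖q - p‖ * ‖q - p‖ ≤ 0 := by
    rw [← hdiff]
    nlinarith [norm_nonneg (x - p), norm_nonneg (x - (1/2:ℝ) • (p + q))]
  have hqp : q - p = 0 :=
    norm_eq_zero.mp (le_antisymm (by nlinarith [norm_nonneg (q - p)]) (norm_nonneg (q - p)))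
  have hpq : p = q := (sub_eq_zero.mp hqp).symm
  exact hpq

theorem stmt15 (u v : H) (hu : u ≠ 0) (hv : v ≠ 0)
    (PU PV : H → H)
    (hPU : IsProjOn {x : H | ∃ t : ℝ, 0 ≤ t ∧ x = t • u} PU)
    (hPV : IsProjOn {x : H | ∃ t : ℝ, 0 ≤ t ∧ x = t • v} PV) :
    (∀ x : H, ⟪PU x, PV x⟫ = 0) ↔ ((∃ t : ℝ, t < 0 ∧ u = t • v) ∨ ⟪u, v⟫ = 0) := by
  have hu2 : (0:ℝ) < ‖u‖ ^ 2 := pow_pos (norm_pos_iff.mpr hu) 2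
  have hv2 : (0:ℝ) < ‖v‖ ^ 2 := pow_pos (norm_pos_iff.mpr hv) 2
  have hform : ∀ x, ⟪PU x, PV x⟫ =
      (max ⟪x, u⟫ 0 / ‖u‖ ^ 2) * (max ⟪x, v⟫ 0 / ‖v‖ ^ 2) * ⟪u, v⟫ := by
    intro x
    rw [proj_ray_formula u hu PU hPU x, proj_ray_formula v hv PV hPV x,
      real_inner_smul_left, real_inner_smul_right]
    ring
  constructor
  · intro h
    by_cases huv : ⟪u, v⟫ = 0
    · exact Or.inr huv
    · left
      have h1 := h u
      rw [hform u] at h1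
      have huu : ⟪u, u⟫ = ‖u‖ ^ 2 := real_inner_self_eq_norm_sq u
      have hmaxu : max ⟪u, u⟫ 0 = ‖u‖ ^ 2 := by rw [huu]; exact max_eq_left hu2.le
      rw [hmaxu, div_self hu2.ne'] at h1
      have hle : ⟪u, v⟫ ≤ 0 := by
        by_contra hle
        push_neg at hle
        rw [max_eq_left hle.le] at h1
        have hpos : (1:ℝ) * (⟪u, v⟫ / ‖v‖ ^ 2) * ⟪u, v⟫ > 0 := by
          rw [one_mul]
          exact mul_pos (div_pos hle hv2) hle
        linarith
      have hneg : ⟪u, v⟫ < 0 := lt_of_le_of_ne hle huv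
      set s := ⟪u, v⟫ / ‖v‖ ^ 2 with hs
      have hs0 : s < 0 := div_neg_of_neg_of_pos hneg hv2
      refine ⟨s, hs0, ?_⟩
      by_contra hne
      obtain ⟨w, hw⟩ : ∃ w : H, w = u - s • v := ⟨_, rfl⟩
      have hw0 : w ≠ 0 := by
        intro h'
        exact hne (sub_eq_zero.mp (hw ▸ h'))
      have hwn : (0:ℝ) < ‖w‖ ^ 2 := pow_pos (norm_pos_iff.mpr hw0) 2
      have hwv : ⟪w, v⟫ = 0 := by
        rw [hw, inner_sub_left, real_inner_smul_left, hs, real_inner_self_eq_norm_sq]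
        field_simp
        ring
      have hu' : u = w + s • v := by rw [hw]; abel
      have hwu : ⟪w, u⟫ = ‖w‖ ^ 2 := by
        rw [hu', inner_add_right, real_inner_smul_right, hwv, real_inner_self_eq_norm_sq]
        ring
      set ε := ‖w‖ ^ 2 / (2 * (-⟪u, v⟫)) with hε
      have hε0 : 0 < ε := div_pos hwn (by linarith)
      set x := w + ε • v with hx
      have hxu : ⟪x, u⟫ = ‖w‖ ^ 2 / 2 := by
        rw [hx, inner_add_left, real_inner_smul_left, hwu, real_inner_comm u v, hε]
        field_simp
        ring
      have hxv : ⟪x, v⟫ = ε * ‖v‖ ^ 2 := by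
        rw [hx, inner_add_left, real_inner_smul_left, hwv, real_inner_self_eq_norm_sq]
        ring
      have hxu0 : 0 < ⟪x, u⟫ := by rw [hxu]; linarith
      have hxv0 : 0 < ⟪x, v⟫ := by rw [hxv]; exact mul_pos hε0 hv2
      have hfx := h x
      rw [hform x, max_eq_left hxu0.le, max_eq_left hxv0.le] at hfx
      have hneg2 : ⟪x, u⟫ / ‖u‖ ^ 2 * (⟪x, v⟫ / ‖v‖ ^ 2) * ⟪u, v⟫ < 0 :=
        mul_neg_of_pos_of_neg (mul_pos (div_pos hxu0 hu2) (div_pos hxv0 hv2)) hneg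
      linarith
  · rintro (⟨t, ht, rfl⟩ | huv) x
    · rw [hform x]
      have hxu : ⟪x, t • v⟫ = t * ⟪x, v⟫ := real_inner_smul_right x v t
      rcases le_or_gt ⟪x, v⟫ 0 with hc | hc
      · rw [max_eq_right hc]
        ring
      · have hle : ⟪x, t • v⟫ ≤ 0 := by rw [hxu]; nlinarith
        rw [max_eq_right hle]
        ring
    · rw [hform x, huv]; ring
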